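/- Let W_0 and W_1 be process matrices in W^{A≺B} (process matrices representing quantum combs with order A≺B). Then the optimal success probability over non-signaling discrimination strategies equals the optimal success probability over adaptive testers: p_succ(W_0, W_1) = p_adapt(W_0, W_1). -/

import Mathlib

open scoped ComplexOrder Matrix

namespace ProcessMatrices

/-- The trace norm (sum of singular values) of a complex square matrix. -/
noncomputable def traceNorm {n : Type} [Fintype n] [DecidableEq n] (X : Matrix n n ℂ) : ℝ :=
  ∑ i, Real.sqrt ((Matrix.posSemidef_conjTranspose_mul_self X).isHermitian.eigenvalues i)

variable {aI aO bI bO : Type} [Fintype aI] [Fintype aO] [Fintype bI] [Fintype bO]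
  [DecidableEq aI] [DecidableEq aO] [DecidableEq bI] [DecidableEq bO]
  [Nonempty aI] [Nonempty aO] [Nonempty bI] [Nonempty bO]

/-- `_{A_O} W = (1_{A_O}/dim A_O) ⊗ tr_{A_O} W`, as an operator on the full space. -/
noncomputable def rAO (W : Matrix (aI × aO × bI × bO) (aI × aO × bI × bO) ℂ) :
    Matrix (aI × aO × bI × bO) (aI × aO × bI × bO) ℂ := fun i j =>
  (if i.2.1 = j.2.1 then ((Fintype.card aO : ℂ))⁻¹ else 0) *
    ∑ k : aO, W (i.1, k, i.2.2.1, i.2.2.2) (j.1, k, j.2.2.1, j.2.2.2)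

/-- `_{B_O} W`. -/
noncomputable def rBO (W : Matrix (aI × aO × bI × bO) (aI × aO × bI × bO) ℂ) :
    Matrix (aI × aO × bI × bO) (aI × aO × bI × bO) ℂ := fun i j =>
  (if i.2.2.2 = j.2.2.2 then ((Fintype.card bO : ℂ))⁻¹ else 0) *
    ∑ k : bO, W (i.1, i.2.1, i.2.2.1, k) (j.1, j.2.1, j.2.2.1, k)

/-- `_{A_O B_O} W`. -/
noncomputable def rAOBO (W : Matrix (aI × aO × bI × bO) (aI × aO × bI × bO) ℂ) :
    Matrix (aI × aO × bI × bO) (aI × aO × bI × bO) ℂ := fun i j =>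
  (if i.2.1 = j.2.1 ∧ i.2.2.2 = j.2.2.2 then
      ((Fintype.card aO : ℂ) * (Fintype.card bO : ℂ))⁻¹ else 0) *
    ∑ k : aO, ∑ l : bO, W (i.1, k, i.2.2.1, l) (j.1, k, j.2.2.1, l)

/-- `_{A_I A_O} W`. -/
noncomputable def rAIAO (W : Matrix (aI × aO × bI × bO) (aI × aO × bI × bO) ℂ) :
    Matrix (aI × aO × bI × bO) (aI × aO × bI × bO) ℂ := fun i j =>
  (if i.1 = j.1 ∧ i.2.1 = j.2.1 then
      ((Fintype.card aI : ℂ) * (Fintype.card aO : ℂ))⁻¹ else 0) *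
    ∑ k : aI, ∑ l : aO, W (k, l, i.2.2.1, i.2.2.2) (k, l, j.2.2.1, j.2.2.2)

/-- `_{B_I B_O} W`. -/
noncomputable def rBIBO (W : Matrix (aI × aO × bI × bO) (aI × aO × bI × bO) ℂ) :
    Matrix (aI × aO × bI × bO) (aI × aO × bI × bO) ℂ := fun i j =>
  (if i.2.2.1 = j.2.2.1 ∧ i.2.2.2 = j.2.2.2 then
      ((Fintype.card bI : ℂ) * (Fintype.card bO : ℂ))⁻¹ else 0) *
    ∑ k : bI, ∑ l : bO, W (i.1, i.2.1, k, l) (j.1, j.2.1, k, l)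

/-- `_{A_I A_O B_O} W`. -/
noncomputable def rAIAOBO (W : Matrix (aI × aO × bI × bO) (aI × aO × bI × bO) ℂ) :
    Matrix (aI × aO × bI × bO) (aI × aO × bI × bO) ℂ := fun i j =>
  (if i.1 = j.1 ∧ i.2.1 = j.2.1 ∧ i.2.2.2 = j.2.2.2 then
      ((Fintype.card aI : ℂ) * (Fintype.card aO : ℂ) * (Fintype.card bO : ℂ))⁻¹ else 0) *
    ∑ k : aI, ∑ l : aO, ∑ m : bO, W (k, l, i.2.2.1, m) (k, l, j.2.2.1, m)

/-- `_{A_O B_I B_O} W`. -/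
noncomputable def rAOBIBO (W : Matrix (aI × aO × bI × bO) (aI × aO × bI × bO) ℂ) :
    Matrix (aI × aO × bI × bO) (aI × aO × bI × bO) ℂ := fun i j =>
  (if i.2.1 = j.2.1 ∧ i.2.2.1 = j.2.2.1 ∧ i.2.2.2 = j.2.2.2 then
      ((Fintype.card aO : ℂ) * (Fintype.card bI : ℂ) * (Fintype.card bO : ℂ))⁻¹ else 0) *
    ∑ k : aO, ∑ l : bI, ∑ m : bO, W (i.1, k, l, m) (j.1, k, l, m)

/-- `W` is a process matrix. -/
structure IsProcessMatrix (W : Matrix (aI × aO × bI × bO) (aI × aO × bI × bO) ℂ) : Prop where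
  posSemidef : W.PosSemidef
  condA : rAIAO W = rAIAOBO W
  condB : rBIBO W = rAOBIBO W
  condAB : W = rBO W + rAO W - rAOBO W
  traceEq : W.trace = (Fintype.card aO : ℂ) * (Fintype.card bO : ℂ)

/-- Partial trace over `A_O`. -/
noncomputable def ptrAO (N : Matrix (aI × aO × bI × bO) (aI × aO × bI × bO) ℂ) :
    Matrix (aI × bI × bO) (aI × bI × bO) ℂ := fun i j =>
  ∑ k : aO, N (i.1, k, i.2.1, i.2.2) (j.1, k, j.2.1, j.2.2)

/-- Partial trace over `B_O`. -/
noncomputable def ptrBO (N : Matrix (aI × aO × bI × bO) (aI × aO × bI × bO) ℂ) :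
    Matrix (aI × aO × bI) (aI × aO × bI) ℂ := fun i j =>
  ∑ k : bO, N (i.1, i.2.1, i.2.2, k) (j.1, j.2.1, j.2.2, k)

/-- Partial trace over `A_O ⊗ B_O`. -/
noncomputable def ptrAOBO (N : Matrix (aI × aO × bI × bO) (aI × aO × bI × bO) ℂ) :
    Matrix (aI × bI) (aI × bI) ℂ := fun i j =>
  ∑ k : aO, ∑ l : bO, N (i.1, k, i.2, l) (j.1, k, j.2, l)

/-- `N` is the Choi matrix of a non-signaling channel. -/
structure MemNS (N : Matrix (aI × aO × bI × bO) (aI × aO × bI × bO) ℂ) : Prop where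
  posSemidef : N.PosSemidef
  trChannel : ptrAOBO N = 1
  nsA : ∀ i j : aI × bI × bO, ptrAO N i j =
    (if i.1 = j.1 then ((Fintype.card aI : ℂ))⁻¹ else 0) *
      ∑ m : aI, ptrAO N (m, i.2.1, i.2.2) (m, j.2.1, j.2.2)
  nsB : ∀ i j : aI × aO × bI, ptrBO N i j =
    (if i.2.2 = j.2.2 then ((Fintype.card bI : ℂ))⁻¹ else 0) *
      ∑ m : bI, ptrBO N (i.1, i.2.1, m) (j.1, j.2.1, m)

/-- The positive semidefinite square root, as `Matrix.PosSemidef.sqrt` was defined in older Mathlib. -/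
noncomputable def psdSqrt {n 𝕜 : Type*} [Fintype n] [DecidableEq n] [RCLike 𝕜] {A : Matrix n n 𝕜}
    (hA : A.PosSemidef) : Matrix n n 𝕜 :=
  hA.1.eigenvectorUnitary.1 * Matrix.diagonal ((↑) ∘ (√·) ∘ hA.1.eigenvalues) *
    (star hA.1.eigenvectorUnitary : Matrix n n 𝕜)

/-- `sup { ‖√N (W₀ - W₁) √N‖₁ : N ∈ NS }`. -/
noncomputable def discrBound (W0 W1 : Matrix (aI × aO × bI × bO) (aI × aO × bI × bO) ℂ) : ℝ :=
  sSup { x : ℝ | ∃ N : Matrix (aI × aO × bI × bO) (aI × aO × bI × bO) ℂ, ∃ hN : MemNS N,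
    x = traceNorm (psdSqrt hN.posSemidef * (W0 - W1) * psdSqrt hN.posSemidef) }

/-- The optimal probability of discriminating the process matrices `W0` and `W1`
over non-signaling strategies. -/
noncomputable def pSucc (W0 W1 : Matrix (aI × aO × bI × bO) (aI × aO × bI × bO) ℂ) : ℝ :=
  (1/2) * sSup { x : ℝ | ∃ S0 S1 : Matrix (aI × aO × bI × bO) (aI × aO × bI × bO) ℂ,
    S0.PosSemidef ∧ S1.PosSemidef ∧ MemNS (S0 + S1) ∧
    x = ((W0 * S0).trace + (W1 * S1).trace).re }

/-- `W` is a process matrix representing a quantum comb with causal order `A ≺ B`: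
`W = W' ⊗ 1_{B_O}` with `tr_{B_I} W' = W'' ⊗ 1_{A_O}`. -/
def MemCombAB (W : Matrix (aI × aO × bI × bO) (aI × aO × bI × bO) ℂ) : Prop :=
  IsProcessMatrix W ∧
  ∃ W' : Matrix (aI × aO × bI) (aI × aO × bI) ℂ,
    (∀ i j, W i j = (if i.2.2.2 = j.2.2.2 then 1 else 0) *
        W' (i.1, i.2.1, i.2.2.1) (j.1, j.2.1, j.2.2.1)) ∧
    ∃ W'' : Matrix aI aI ℂ, ∀ p q : aI × aO,
      (∑ k : bI, W' (p.1, p.2, k) (q.1, q.2, k)) = (if p.2 = q.2 then 1 else 0) * W'' p.1 q.1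

/-- `W` is a process matrix representing a quantum comb with causal order `B ≺ A`:
`W = W' ⊗ 1_{A_O}` (in the `A_O` slot) with `tr_{A_I} W' = W'' ⊗ 1_{B_O}`. -/
def MemCombBA (W : Matrix (aI × aO × bI × bO) (aI × aO × bI × bO) ℂ) : Prop :=
  IsProcessMatrix W ∧
  ∃ W' : Matrix (aI × bI × bO) (aI × bI × bO) ℂ,
    (∀ i j, W i j = (if i.2.1 = j.2.1 then 1 else 0) *
        W' (i.1, i.2.2.1, i.2.2.2) (j.1, j.2.2.1, j.2.2.2)) ∧
    ∃ W'' : Matrix bI bI ℂ, ∀ p q : bI × bO,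
      (∑ k : aI, W' (k, p.1, p.2) (k, q.1, q.2)) = (if p.2 = q.2 then 1 else 0) * W'' p.1 q.1

/-- `W` is a free process matrix: `W = ρ ⊗ 1_{A_O ⊗ B_O}` for a density operator `ρ`. -/
def MemFree (W : Matrix (aI × aO × bI × bO) (aI × aO × bI × bO) ℂ) : Prop :=
  ∃ ρ : Matrix (aI × bI) (aI × bI) ℂ, ρ.PosSemidef ∧ ρ.trace = 1 ∧
    ∀ i j, W i j = (if i.2.1 = j.2.1 ∧ i.2.2.2 = j.2.2.2 then 1 else 0) *
      ρ (i.1, i.2.2.1) (j.1, j.2.2.1)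

/-- `W` is a causally separable process matrix. -/
def MemSep (W : Matrix (aI × aO × bI × bO) (aI × aO × bI × bO) ℂ) : Prop :=
  ∃ p : ℝ, 0 ≤ p ∧ p ≤ 1 ∧ ∃ W1 W2 : Matrix (aI × aO × bI × bO) (aI × aO × bI × bO) ℂ,
    MemCombAB W1 ∧ MemCombBA W2 ∧ W = (p : ℂ) • W1 + ((1 - p : ℝ) : ℂ) • W2

/-- `(L0, L1)` is an adaptive tester for the causal order `A ≺ B`. -/
structure IsAdaptiveTester (L0 L1 : Matrix (aI × aO × bI × bO) (aI × aO × bI × bO) ℂ) :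
    Prop where
  posSemidef0 : L0.PosSemidef
  posSemidef1 : L1.PosSemidef
  comb : ∃ J : Matrix (aI × aO) (aI × aO) ℂ, J.PosSemidef ∧
    (∀ p q : aI, (∑ k : aO, J (p, k) (q, k)) = if p = q then 1 else 0) ∧
    ∀ i j : aI × aO × bI, ptrBO (L0 + L1) i j =
      (if i.2.2 = j.2.2 then 1 else 0) * J (i.1, i.2.1) (j.1, j.2.1)

/-- The optimal probability of discriminating `W0` and `W1` over adaptive testers. -/
noncomputable def pAdapt (W0 W1 : Matrix (aI × aO × bI × bO) (aI × aO × bI × bO) ℂ) : ℝ :=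
  (1/2) * sSup { x : ℝ | ∃ L0 L1 : Matrix (aI × aO × bI × bO) (aI × aO × bI × bO) ℂ,
    IsAdaptiveTester L0 L1 ∧ x = ((W0 * L0).trace + (W1 * L1).trace).re }

section Aux2
variable {α β : Type} [Fintype α] [Fintype β] [DecidableEq α] [DecidableEq β]

/-- Embedding matrix: the isometry `α → α × β` at fixed `k`. -/
def embedMat (k : β) : Matrix (α × β) α ℂ := fun i q => if i.1 = q ∧ i.2 = k then 1 else 0

lemma trace_right_psd {M : Matrix (α × β) (α × β) ℂ} (hM : M.PosSemidef) :
    Matrix.PosSemidef (Matrix.of fun p q : α => ∑ k : β, M (p, k) (q, k)) := by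
  have h : (Matrix.of fun p q : α => ∑ k : β, M (p, k) (q, k)) =
      ∑ k : β, (embedMat (α := α) k)ᴴ * M * (embedMat (α := α) k) := by
    ext p q
    simp only [Matrix.sum_apply, Matrix.mul_apply, Matrix.conjTranspose_apply, embedMat,
      Matrix.of_apply, ite_and]
    simp [Fintype.sum_prod_type, Finset.sum_ite_eq', apply_ite (star : ℂ → ℂ), star_one,
      star_zero, ite_mul, zero_mul, one_mul, ite_and]
  rw [h]
  refine Finset.sum_induction _ _ (fun a b ha hb => ha.add hb) Matrix.PosSemidef.zero
    fun k _ => hM.conjTranspose_mul_mul_same _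

lemma id_tensor_psd {M : Matrix α α ℂ} (hM : M.PosSemidef) :
    Matrix.PosSemidef (Matrix.of fun i j : α × β =>
      (if i.2 = j.2 then (1 : ℂ) else 0) * M i.1 j.1) := by
  have h : (Matrix.of fun i j : α × β => (if i.2 = j.2 then (1 : ℂ) else 0) * M i.1 j.1) =
      ∑ k : β, (embedMat (α := α) k) * M * (embedMat (α := α) k)ᴴ := by
    ext i j
    simp only [Matrix.sum_apply, Matrix.mul_apply, Matrix.conjTranspose_apply, embedMat,
      Matrix.of_apply, ite_and]
    simp [Fintype.sum_prod_type, Finset.sum_ite_eq', Finset.sum_ite_eq,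
      apply_ite (star : ℂ → ℂ), star_one, star_zero, ite_mul, mul_ite, zero_mul, one_mul,
      mul_zero, mul_one, ite_and, eq_comm]
  rw [h]
  refine Finset.sum_induction _ _ (fun a b ha hb => ha.add hb) Matrix.PosSemidef.zero
    fun k _ => hM.mul_mul_conjTranspose_same _

omit [DecidableEq α] [DecidableEq β] [Fintype β] in
lemma psd_smul {M : Matrix α α ℂ} (hM : M.PosSemidef) {c : ℝ} (hc : 0 ≤ c) :
    ((c : ℂ) • M).PosSemidef := by
  rw [Matrix.posSemidef_iff_dotProduct_mulVec] at hM ⊢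
  refine ⟨?_, fun x => ?_⟩
  · unfold Matrix.IsHermitian
    rw [Matrix.conjTranspose_smul, hM.1.eq]
    congr 1
    simp
  · have hq := hM.2 x
    rw [Matrix.smul_mulVec, dotProduct_smul]
    have h1 : 0 ≤ (dotProduct (star x) (M.mulVec x)).re := by
      exact_mod_cast (Complex.le_def.mp hq).1
    have h2 : (dotProduct (star x) (M.mulVec x)).im = 0 := by
      have := (Complex.le_def.mp hq).2; simpa using this.symm
    rw [Complex.le_def]
    refine ⟨by simp [Complex.mul_re, h2]; positivity, by simp [Complex.mul_im, h2]⟩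

end Aux2

lemma ptrBO_psd {L : Matrix (aI × aO × bI × bO) (aI × aO × bI × bO) ℂ} (hL : L.PosSemidef) :
    (ptrBO L).PosSemidef := by
  have := trace_right_psd (hL.submatrix
    (fun x : (aI × aO × bI) × bO => (x.1.1, x.1.2.1, x.1.2.2, x.2)))
  exact this

lemma ptrBO_add (L0 L1 : Matrix (aI × aO × bI × bO) (aI × aO × bI × bO) ℂ) :
    ptrBO (L0 + L1) = ptrBO L0 + ptrBO L1 := by
  ext i j
  simp [ptrBO, Finset.sum_add_distrib]

/-- `S = (tr_{B_O} L) ⊗ 1_{B_O}/d_{B_O}`. -/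
noncomputable def sOf (L : Matrix (aI × aO × bI × bO) (aI × aO × bI × bO) ℂ) :
    Matrix (aI × aO × bI × bO) (aI × aO × bI × bO) ℂ := fun i j =>
  (if i.2.2.2 = j.2.2.2 then ((Fintype.card bO : ℂ))⁻¹ else 0) *
    ptrBO L (i.1, i.2.1, i.2.2.1) (j.1, j.2.1, j.2.2.1)

lemma sOf_psd {L : Matrix (aI × aO × bI × bO) (aI × aO × bI × bO) ℂ} (hL : L.PosSemidef) :
    (sOf L).PosSemidef := by
  set c : ℝ := (Fintype.card bO : ℝ)⁻¹ with hc
  have hT : (((c : ℂ)) • ptrBO L).PosSemidef :=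
    psd_smul (ptrBO_psd hL) (by positivity)
  have h2 := (id_tensor_psd (β := bO) hT).submatrix
    (fun i : aI × aO × bI × bO => ((i.1, i.2.1, i.2.2.1), i.2.2.2))
  have h3 : sOf L = (Matrix.of fun i j : (aI × aO × bI) × bO =>
      (if i.2 = j.2 then (1 : ℂ) else 0) *
        (((c : ℂ)) • ptrBO L) i.1 j.1).submatrix
      (fun i : aI × aO × bI × bO => ((i.1, i.2.1, i.2.2.1), i.2.2.2))
      (fun i : aI × aO × bI × bO => ((i.1, i.2.1, i.2.2.1), i.2.2.2)) := by
    ext i j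
    simp only [Matrix.submatrix_apply, Matrix.of_apply, Matrix.smul_apply, sOf, smul_eq_mul, hc]
    push_cast
    split_ifs <;> ring
  rw [h3]
  exact h2

lemma ptrBO_sOf (L : Matrix (aI × aO × bI × bO) (aI × aO × bI × bO) ℂ) :
    ptrBO (sOf L) = ptrBO L := by
  ext i j
  have hbO : ((Fintype.card bO : ℂ)) ≠ 0 :=
    Nat.cast_ne_zero.mpr Fintype.card_ne_zero
  show (∑ k : bO, sOf L _ _) = _
  simp only [sOf]
  simp [← Finset.sum_mul, mul_inv_cancel₀ hbO, mul_comm]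

lemma sOf_add (L0 L1 : Matrix (aI × aO × bI × bO) (aI × aO × bI × bO) ℂ) :
    sOf (L0 + L1) = sOf L0 + sOf L1 := by
  ext i j
  simp only [sOf, Matrix.add_apply, ptrBO_add, mul_add]

lemma trace_comb {W : Matrix (aI × aO × bI × bO) (aI × aO × bI × bO) ℂ}
    {W' : Matrix (aI × aO × bI) (aI × aO × bI) ℂ}
    (hW : ∀ i j, W i j = (if i.2.2.2 = j.2.2.2 then 1 else 0) *
        W' (i.1, i.2.1, i.2.2.1) (j.1, j.2.1, j.2.2.1))
    (S : Matrix (aI × aO × bI × bO) (aI × aO × bI × bO) ℂ) :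
    (W * S).trace = ∑ p : aI × aO × bI, ∑ q : aI × aO × bI, W' p q * ptrBO S q p := by
  have h1 : (W * S).trace = ∑ i : aI × aO × bI × bO, ∑ j : aI × aO × bI × bO,
      W i j * S j i := by
    simp [Matrix.trace, Matrix.diag, Matrix.mul_apply]
  rw [h1]
  simp only [hW, ite_mul, one_mul, zero_mul]
  simp only [Fintype.sum_prod_type, Finset.sum_ite_eq, Finset.sum_ite_eq', Finset.mem_univ,
    if_true, ptrBO, Finset.mul_sum]
  refine Finset.sum_congr rfl fun a1 _ => Finset.sum_congr rfl fun a2 _ =>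
    Finset.sum_congr rfl fun a3 _ => ?_
  rw [Finset.sum_comm]
  refine Finset.sum_congr rfl fun b1 _ => ?_
  rw [Finset.sum_comm]
  refine Finset.sum_congr rfl fun b2 _ => ?_
  rw [Finset.sum_comm]

lemma nsJ_psd {N : Matrix (aI × aO × bI × bO) (aI × aO × bI × bO) ℂ} (hN : N.PosSemidef) :
    Matrix.PosSemidef (Matrix.of fun p q : aI × aO =>
      ((Fintype.card bI : ℂ))⁻¹ * ∑ m : bI, ptrBO N (p.1, p.2, m) (q.1, q.2, m)) := by
  set c : ℝ := (Fintype.card bI : ℝ)⁻¹ with hc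
  have h := psd_smul (trace_right_psd ((ptrBO_psd hN).submatrix
      (fun x : (aI × aO) × bI => (x.1.1, x.1.2, x.2)))) (c := c) (by positivity)
  have he : (Matrix.of fun p q : aI × aO =>
      ((Fintype.card bI : ℂ))⁻¹ * ∑ m : bI, ptrBO N (p.1, p.2, m) (q.1, q.2, m)) =
      (c : ℂ) • (Matrix.of fun p q : aI × aO => ∑ k : bI, ((ptrBO N).submatrix
        (fun x : (aI × aO) × bI => (x.1.1, x.1.2, x.2))
        (fun x : (aI × aO) × bI => (x.1.1, x.1.2, x.2))) (p, k) (q, k)) := by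
    ext p q
    simp only [Matrix.of_apply, Matrix.smul_apply, Matrix.submatrix_apply, smul_eq_mul, hc]
    push_cast
    ring
  rw [he]
  exact h

lemma memNS_sOf {L : Matrix (aI × aO × bI × bO) (aI × aO × bI × bO) ℂ} (hL : L.PosSemidef)
    {J : Matrix (aI × aO) (aI × aO) ℂ}
    (hJtr : ∀ p q : aI, (∑ k : aO, J (p, k) (q, k)) = if p = q then 1 else 0)
    (hcomb : ∀ i j : aI × aO × bI, ptrBO L i j =
      (if i.2.2 = j.2.2 then 1 else 0) * J (i.1, i.2.1) (j.1, j.2.1)) :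
    MemNS (sOf L) := by
  have hbO : ((Fintype.card bO : ℂ)) ≠ 0 := Nat.cast_ne_zero.mpr Fintype.card_ne_zero
  have hbI : ((Fintype.card bI : ℂ)) ≠ 0 := Nat.cast_ne_zero.mpr Fintype.card_ne_zero
  have haI : ((Fintype.card aI : ℂ)) ≠ 0 := Nat.cast_ne_zero.mpr Fintype.card_ne_zero
  refine ⟨sOf_psd hL, ?_, ?_, ?_⟩
  · ext i j
    show (∑ k : aO, ∑ l : bO, sOf L _ _) = _
    have e1 : ∀ (k : aO) (l : bO), sOf L (i.1, k, i.2, l) (j.1, k, j.2, l) =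
        ((Fintype.card bO : ℂ))⁻¹ * ((if i.2 = j.2 then 1 else 0) * J (i.1, k) (j.1, k)) := by
      intro k l
      simp [sOf, hcomb]
    simp only [e1, Finset.sum_const, Finset.card_univ, nsmul_eq_mul, ← mul_assoc]
    rw [← Finset.mul_sum, hJtr]
    rw [mul_inv_cancel₀ hbO, one_mul, Matrix.one_apply]
    by_cases h2 : i.2 = j.2 <;> by_cases h1 : i.1 = j.1 <;>
      simp [Prod.ext_iff, h1, h2]
  · intro i j
    have e1 : ∀ k : aO, sOf L (i.1, k, i.2.1, i.2.2) (j.1, k, j.2.1, j.2.2) =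
        (if i.2.2 = j.2.2 then ((Fintype.card bO : ℂ))⁻¹ else 0) *
          ((if i.2.1 = j.2.1 then 1 else 0) * J (i.1, k) (j.1, k)) := by
      intro k
      simp [sOf, hcomb]
    show (∑ k : aO, sOf L _ _) = (if i.1 = j.1 then ((Fintype.card aI : ℂ))⁻¹ else 0) *
      ∑ m : aI, (∑ k : aO, sOf L _ _)
    simp only [e1, ← mul_assoc]
    rw [← Finset.mul_sum, hJtr]
    have e2 : ∀ m : aI, (∑ k : aO, sOf L (m, k, i.2.1, i.2.2) (m, k, j.2.1, j.2.2)) =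
        (if i.2.2 = j.2.2 then ((Fintype.card bO : ℂ))⁻¹ else 0) *
          (if i.2.1 = j.2.1 then 1 else 0) := by
      intro m
      have e1' : ∀ k : aO, sOf L (m, k, i.2.1, i.2.2) (m, k, j.2.1, j.2.2) =
          (if i.2.2 = j.2.2 then ((Fintype.card bO : ℂ))⁻¹ else 0) *
            ((if i.2.1 = j.2.1 then 1 else 0) * J (m, k) (m, k)) := by
        intro k
        simp [sOf, hcomb]
      simp only [e1', ← mul_assoc]
      rw [← Finset.mul_sum, hJtr]
      simp
    simp only [e2]
    rw [Finset.sum_const, Finset.card_univ, nsmul_eq_mul]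
    by_cases h1 : i.1 = j.1 <;> by_cases h2 : i.2.1 = j.2.1 <;> by_cases h3 : i.2.2 = j.2.2 <;>
      simp [h1, h2, h3] <;> field_simp
  · intro i j
    have hp : ∀ i' j' : aI × aO × bI, ptrBO (sOf L) i' j' =
        (if i'.2.2 = j'.2.2 then 1 else 0) * J (i'.1, i'.2.1) (j'.1, j'.2.1) := by
      intro i' j'
      rw [ptrBO_sOf, hcomb]
    rw [hp]
    simp only [hp]
    by_cases h3 : i.2.2 = j.2.2
    · simp only [h3, if_pos rfl, if_true, one_mul]
      rw [Finset.sum_const, Finset.card_univ, nsmul_eq_mul, ← mul_assoc,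
        inv_mul_cancel₀ hbI, one_mul]
    · simp [h3]


/-- For process matrices representing quantum combs of order `A ≺ B`,
the optimal success probability over non-signaling strategies equals the optimal
success probability over adaptive testers. -/
theorem statement4 {aI aO bI bO : Type}
    [Fintype aI] [Fintype aO] [Fintype bI] [Fintype bO]
    [DecidableEq aI] [DecidableEq aO] [DecidableEq bI] [DecidableEq bO]
    [Nonempty aI] [Nonempty aO] [Nonempty bI] [Nonempty bO]
    (W0 W1 : Matrix (aI × aO × bI × bO) (aI × aO × bI × bO) ℂ)
    (h0 : MemCombAB W0) (h1 : MemCombAB W1) :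
    pSucc W0 W1 = pAdapt W0 W1 := by
  obtain ⟨-, W0', hW0', -⟩ := h0
  obtain ⟨-, W1', hW1', -⟩ := h1
  have hbI : ((Fintype.card bI : ℂ)) ≠ 0 := Nat.cast_ne_zero.mpr Fintype.card_ne_zero
  unfold pSucc pAdapt
  congr 1
  congr 1
  ext x
  simp only [Set.mem_setOf_eq]
  constructor
  · rintro ⟨S0, S1, hS0, hS1, hNS, rfl⟩
    set N := S0 + S1 with hNdef
    refine ⟨S0, S1, ⟨hS0, hS1, ?_⟩, rfl⟩
    refine ⟨Matrix.of fun p q : aI × aO =>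
      ((Fintype.card bI : ℂ))⁻¹ * ∑ m : bI, ptrBO N (p.1, p.2, m) (q.1, q.2, m),
      nsJ_psd (hS0.add hS1), ?_, ?_⟩
    · intro p q
      have hswap : (∑ k : aO, ∑ m : bI, ptrBO N (p, k, m) (q, k, m)) =
          ∑ m : bI, ptrAOBO N (p, m) (q, m) := by
        rw [Finset.sum_comm]
        rfl
      simp only [Matrix.of_apply]
      rw [← Finset.mul_sum, hswap, hNS.trChannel]
      simp only [Matrix.one_apply, Prod.ext_iff]
      by_cases h : p = q
      · simp [h, Finset.sum_const, Finset.card_univ, nsmul_eq_mul, inv_mul_cancel₀ hbI]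
      · simp [h]
    · intro i j
      rw [hNS.nsB i j]
      simp only [Matrix.of_apply]
      split_ifs <;> ring
  · rintro ⟨L0, L1, ⟨hL0, hL1, ⟨J, hJpsd, hJtr, hcomb⟩⟩, rfl⟩
    have t0 : (W0 * sOf L0).trace = (W0 * L0).trace := by
      rw [trace_comb hW0', trace_comb hW0']
      simp only [ptrBO_sOf]
    have t1 : (W1 * sOf L1).trace = (W1 * L1).trace := by
      rw [trace_comb hW1', trace_comb hW1']
      simp only [ptrBO_sOf]
    refine ⟨sOf L0, sOf L1, sOf_psd hL0, sOf_psd hL1, ?_, ?_⟩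
    · rw [← sOf_add]
      exact memNS_sOf (hL0.add hL1) hJtr hcomb
    · rw [t0, t1]
end ProcessMatrices
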